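/- Let M be a loopless matroid of rank n on {0,...,N} and let β ∈ ⋀^{n-1} V with α = e_M ∧ β expressible as a sum of terms E_Î with all Î independent. Group the terms of β by the rank-(n−1) flats that are their closures: β = β_{J₁} + ... + β_{J_r} where J₁,...,J_r are the rank-(n−1) flats. Then e_{J_k} ∧ β_{J_k} = 0 for every k. -/

import Mathlib

/- Shared definitions: exterior algebra pairing, basis vectors, boundary operator,
   and elementary matroid notions (rank, looplessness) not present in this Mathlib. -/

open ExteriorAlgebra

set_option maxHeartbeats 1000000
set_option synthInstance.maxHeartbeats 400000

open Classical in
/-- `e_S`: sum of the standard basis vectors of `ℤ^n` indexed by `S`. -/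
noncomputable def eS {n : ℕ} (S : Set (Fin n)) : Fin n → ℤ := fun j => if j ∈ S then 1 else 0

/-- the `i`-th standard basis vector of `ℤ^n`. -/
noncomputable def fb {n : ℕ} (i : Fin n) : Fin n → ℤ := Pi.single i 1

/-- The pairing of a pure `k`-fold wedge `v₁ ∧ ... ∧ v_k` of vectors of `V` with the
exterior algebra of the dual module, determined by
`⟨w₁ ∧ ... ∧ w_k, v₁ ∧ ... ∧ v_k⟩ = det (wᵢ (vⱼ))` on the degree-`k` part and `0` on
other degrees. -/
noncomputable def pairPure {V : Type*} [AddCommGroup V] [Module ℤ V] (k : ℕ)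
    (v : Fin k → V) : ExteriorAlgebra ℤ (Module.Dual ℤ V) →ₗ[ℤ] ℤ :=
  ExteriorAlgebra.liftAlternating fun m =>
    if h : m = k then
      h ▸ (Matrix.detRowAlternating.compLinearMap
        (LinearMap.pi fun j : Fin k => LinearMap.applyₗ (v j)))
    else 0

/-- A matroid is loopless if every singleton of the ground set is independent. -/
def Matroid.Loopless' {α : Type*} (M : Matroid α) : Prop := ∀ x ∈ M.E, M.Indep {x}

/-- The rank of a set in a matroid: the largest cardinality of an independent subset. -/
noncomputable def Matroid.rk' {α : Type*} (M : Matroid α) (X : Set α) : ℕ :=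
  sSup {m : ℕ | ∃ I, I ⊆ X ∧ M.Indep I ∧ I.ncard = m}

/-! ### Auxiliary machinery -/

/-- Coefficient-extraction functional: pairing with the dual wedge indexed by `w`. -/
noncomputable def phiW {N : ℕ} (k : ℕ) (w : Fin k → Fin (N + 1)) :
    ExteriorAlgebra ℤ (Fin (N + 1) → ℤ) →ₗ[ℤ] ℤ :=
  ExteriorAlgebra.liftAlternating fun m =>
    if h : m = k then
      h ▸ (Matrix.detRowAlternating.compLinearMap
        (LinearMap.pi fun j : Fin k => LinearMap.proj (w j)))
    else 0

lemma phiW_ιMulti {N k : ℕ} (w : Fin k → Fin (N + 1)) (v : Fin k → (Fin (N + 1) → ℤ)) :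
    phiW k w (ExteriorAlgebra.ιMulti ℤ k v) = Matrix.det (Matrix.of fun i j => v i (w j)) := by
  rw [phiW, ExteriorAlgebra.liftAlternating_apply_ιMulti, dif_pos rfl]
  rfl

lemma fb_injective {n : ℕ} : Function.Injective (fb (n := n)) := by
  intro i j h
  by_contra hne
  have h1 := congrFun h i
  rw [fb, fb, Pi.single_eq_same, Pi.single_eq_of_ne hne] at h1
  exact one_ne_zero h1

lemma ncard_range {N k : ℕ} {u : Fin k → Fin (N + 1)} (hu : Function.Injective u) :
    (Set.range u).ncard = k := by
  rw [← Set.image_univ, Set.ncard_image_of_injective _ hu, Set.ncard_univ,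
    Nat.card_eq_fintype_card, Fintype.card_fin]

lemma phiW_eq_zero {N k : ℕ} {w u : Fin k → Fin (N + 1)} (hw : Function.Injective w)
    (hu : Function.Injective u) (h : Set.range u ≠ Set.range w) :
    phiW k w (ExteriorAlgebra.ιMulti ℤ k fun i => fb (u i)) = 0 := by
  rw [phiW_ιMulti]
  have hns : ¬ Set.range u ⊆ Set.range w := by
    intro hsub
    exact h (Set.eq_of_subset_of_ncard_le hsub
      (by rw [ncard_range hw, ncard_range hu]) (Set.finite_range w))
  obtain ⟨_, ⟨i, rfl⟩, hi⟩ := Set.not_subset.mp hns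
  apply Matrix.det_eq_zero_of_row_eq_zero i
  intro j
  simp only [Matrix.of_apply]
  rw [fb, Pi.single_eq_of_ne]
  exact fun hji => hi ⟨j, hji⟩

lemma phiW_self {N k : ℕ} {w : Fin k → Fin (N + 1)} (hw : Function.Injective w) :
    phiW k w (ExteriorAlgebra.ιMulti ℤ k fun i => fb (w i)) = 1 := by
  rw [phiW_ιMulti]
  have h1 : (Matrix.of fun i j => fb (w i) (w j)) = (1 : Matrix (Fin k) (Fin k) ℤ) := by
    ext i j
    rw [Matrix.of_apply, fb, Pi.single_apply, Matrix.one_apply]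
    by_cases h : i = j <;> simp [h, hw.eq_iff, eq_comm]
  rw [h1, Matrix.det_one]

lemma ιMulti_fb_zero {N k : ℕ} {u : Fin k → Fin (N + 1)} (hu : ¬ Function.Injective u) :
    ExteriorAlgebra.ιMulti ℤ k (fun i => fb (u i)) = 0 := by
  apply AlternatingMap.map_eq_zero_of_not_injective
  intro hinj
  exact hu fun i j h => hinj (by simp only [h])

lemma ι_mul_ιMulti {N k : ℕ} (j : Fin (N + 1)) (v : Fin k → Fin (N + 1)) :
    ExteriorAlgebra.ι ℤ (fb j) * ExteriorAlgebra.ιMulti ℤ k (fun i => fb (v i)) =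
      ExteriorAlgebra.ιMulti ℤ (k + 1)
        (fun i => fb ((Fin.cons j v : Fin (k + 1) → Fin (N + 1)) i)) := by
  have h : (fun i => fb ((Fin.cons j v : Fin (k + 1) → Fin (N + 1)) i)) =
      Fin.cons (fb j) (fun i => fb (v i)) := by
    funext i
    refine Fin.cases ?_ ?_ i <;> simp
  rw [h, ExteriorAlgebra.ιMulti_succ_apply]
  simp [Matrix.vecTail, Function.comp_def]

lemma eS_eq_sum {N : ℕ} (S : Set (Fin (N + 1))) :
    eS S = ∑ j : Fin (N + 1), eS S j • fb j := by
  funext x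
  rw [Finset.sum_apply]
  simp only [fb, Pi.smul_apply, Pi.single_apply, smul_eq_mul, mul_ite, mul_one, mul_zero]
  rw [Finset.sum_ite_eq Finset.univ x (fun j => eS S j)]
  simp

lemma eS_univ_split {N : ℕ} (J : Set (Fin (N + 1))) :
    eS (Set.univ : Set (Fin (N + 1))) = eS J + eS Jᶜ := by
  funext x
  by_cases h : x ∈ J <;> simp [eS, h]

lemma strictMono_range_eq {N k : ℕ} {f g : Fin k → Fin (N + 1)} (hf : StrictMono f)
    (hg : StrictMono g) (h : Set.range f = Set.range g) : f = g := by
  have h2 : Set.InjOn Set.range { f : Fin k → Fin (N + 1) | StrictMono f } :=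
    @Set.range_injOn_strictMono (Fin k) (Fin (N + 1)) (Fin.instLinearOrder)
      (PartialOrder.toPreorder) (Finite.to_wellFoundedLT)
  exact h2 hf hg h

lemma extraction {N k : ℕ} (x : ExteriorAlgebra ℤ (Fin (N + 1) → ℤ))
    (hx : x ∈ Submodule.span ℤ {y : ExteriorAlgebra ℤ (Fin (N + 1) → ℤ) |
      ∃ u : Fin k → Fin (N + 1), Function.Injective u ∧
      y = ExteriorAlgebra.ιMulti ℤ k fun i => fb (u i)})
    (hphi : ∀ w : Fin k → Fin (N + 1), Function.Injective w → phiW k w x = 0) : x = 0 := by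
  classical
  set F : {w : Fin k → Fin (N + 1) // StrictMono w} → ExteriorAlgebra ℤ (Fin (N + 1) → ℤ) :=
    fun w => ExteriorAlgebra.ιMulti ℤ k fun i => fb (w.1 i) with hF
  have hx' : x ∈ Submodule.span ℤ (Set.range F) := by
    refine Submodule.span_le.mpr ?_ hx
    rintro y ⟨u, hu, rfl⟩
    set σ := Tuple.sort u with hσ
    have hmono : StrictMono (u ∘ σ) :=
      (Tuple.monotone_sort u).strictMono_of_injective (hu.comp σ.injective)
    have he : (fun i => fb (u i)) = (fun i => fb ((u ∘ σ) i)) ∘ (σ⁻¹ : Equiv.Perm (Fin k)) := by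
      funext i
      simp [Function.comp]
    rw [he, AlternatingMap.map_perm, Units.smul_def]
    exact Submodule.smul_mem _ _ (Submodule.subset_span ⟨⟨u ∘ σ, hmono⟩, rfl⟩)
  obtain ⟨c, hc⟩ := (Submodule.mem_span_range_iff_exists_fun ℤ).mp hx'
  have hco : ∀ w₀ : {w : Fin k → Fin (N + 1) // StrictMono w}, c w₀ = 0 := by
    intro w₀
    have h0 := hphi w₀.1 w₀.2.injective
    rw [← hc, map_sum] at h0
    rw [Finset.sum_eq_single w₀ (fun b _ hb => ?_) (by simp)] at h0
    · rw [map_smul, hF] at h0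
      simp only [phiW_self w₀.2.injective, smul_eq_mul, mul_one] at h0
      exact h0
    · have hr : Set.range b.1 ≠ Set.range w₀.1 := by
        intro hr
        exact hb (Subtype.ext (strictMono_range_eq b.2 w₀.2 hr))
      rw [map_smul, hF, phiW_eq_zero w₀.2.injective b.2.injective hr, smul_zero]
  rw [← hc]
  exact Finset.sum_eq_zero fun w _ => by rw [hco w, zero_smul]

/-- Let `M` be a loopless matroid of rank `n` on `{0, ..., N}` and
`β ∈ ⋀^{n-1} V` with `α = e_M ∧ β` a combination of independent terms `E_Î`.  Grouping
the (independent) terms of `β` by the rank-`(n-1)` flats that are their closures,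
`β = β_{J₁} + ... + β_{J_r}`, one has `e_{J_k} ∧ β_{J_k} = 0` for every `k`. -/
theorem stmt_18 {N n : ℕ} (M : Matroid (Fin (N + 1))) (hM : M.Loopless')
    (hE : M.E = Set.univ) (hn : M.rk' Set.univ = n) (hpos : 0 < n)
    (βc : Set (Fin (N + 1)) → ExteriorAlgebra ℤ (Fin (N + 1) → ℤ))
    (hsupp : ∀ J, βc J ≠ 0 → M.IsFlat J ∧ M.rk' J = n - 1)
    (hβ : ∀ J, βc J ∈ Submodule.span ℤ
      {x : ExteriorAlgebra ℤ (Fin (N + 1) → ℤ) | ∃ v : Fin (n - 1) → Fin (N + 1),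
        Function.Injective v ∧ M.Indep (Set.range v) ∧ M.closure (Set.range v) = J ∧
        x = ιMulti ℤ (n - 1) fun i => fb (v i)})
    (hα : ExteriorAlgebra.ι ℤ (eS Set.univ) * ∑ᶠ J, βc J ∈ Submodule.span ℤ
      {x : ExteriorAlgebra ℤ (Fin (N + 1) → ℤ) | ∃ v : Fin n → Fin (N + 1),
        Function.Injective v ∧ M.Indep (Set.range v) ∧
        x = ιMulti ℤ n fun i => fb (v i)}) :
    ∀ J, ExteriorAlgebra.ι ℤ (eS J) * βc J = 0 := by
  classical
  obtain ⟨m, rfl⟩ : ∃ m, n = m + 1 := ⟨n - 1, (Nat.succ_pred_eq_of_pos hpos).symm⟩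
  -- note: `m + 1 - 1` reduces definitionally to `m`
  -- the master vanishing lemma
  have main : ∀ (T J : Set (Fin (N + 1))) (w : Fin (m + 1) → Fin (N + 1)),
      Function.Injective w →
      (∀ (j : Fin (N + 1)) (v : Fin m → Fin (N + 1)), j ∈ T → j ∉ Set.range v →
        Function.Injective v → M.Indep (Set.range v) → M.closure (Set.range v) = J →
        Set.range (Fin.cons j v : Fin (m + 1) → Fin (N + 1)) ≠ Set.range w) →
      phiW (m + 1) w (ExteriorAlgebra.ι ℤ (eS T) * βc J) = 0 := by
    intro T J w hw hcond
    have hker : {x : ExteriorAlgebra ℤ (Fin (N + 1) → ℤ) | ∃ v : Fin m → Fin (N + 1),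
        Function.Injective v ∧ M.Indep (Set.range v) ∧ M.closure (Set.range v) = J ∧
        x = ExteriorAlgebra.ιMulti ℤ m fun i => fb (v i)} ⊆
        ↑(LinearMap.ker ((phiW (m + 1) w).comp
          (LinearMap.mulLeft ℤ (ExteriorAlgebra.ι ℤ (eS T))))) := by
      rintro x ⟨v, hv, hvI, hvJ, rfl⟩
      simp only [SetLike.mem_coe, LinearMap.mem_ker, LinearMap.comp_apply,
        LinearMap.mulLeft_apply]
      rw [eS_eq_sum T, map_sum, Finset.sum_mul, map_sum]
      refine Finset.sum_eq_zero fun j _ => ?_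
      rw [map_smul, smul_mul_assoc, map_smul]
      by_cases hjT : j ∈ T
      · rw [ι_mul_ιMulti]
        by_cases hjv : j ∈ Set.range v
        · rw [ιMulti_fb_zero (by rw [Fin.cons_injective_iff]; tauto), map_zero, smul_zero]
        · rw [phiW_eq_zero hw (Fin.cons_injective_iff.mpr ⟨hjv, hv⟩)
            (hcond j v hjT hjv hv hvI hvJ), smul_zero]
      · rw [show eS T j = 0 from by simp [eS, hjT], zero_smul]
    have h := (Submodule.span_le.mpr hker) (hβ J)
    rw [LinearMap.mem_ker, LinearMap.comp_apply, LinearMap.mulLeft_apply] at h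
    exact h
  -- complement part always vanishes on dependent monomials
  have hsplit : ∀ w : Fin (m + 1) → Fin (N + 1), Function.Injective w →
      ¬ M.Indep (Set.range w) →
      phiW (m + 1) w (ExteriorAlgebra.ι ℤ (eS (M.closure (Set.range w))) *
        βc (M.closure (Set.range w))) = 0 := by
    intro w hw hdep
    have hcompl : ∀ J : Set (Fin (N + 1)),
        phiW (m + 1) w (ExteriorAlgebra.ι ℤ (eS Jᶜ) * βc J) = 0 := by
      intro J
      refine main Jᶜ J w hw ?_
      intro j v hjT hjv hv hvI hvJ hr
      have hjE : j ∈ M.E := by rw [hE]; trivial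
      have hind : M.Indep (Set.range (Fin.cons j v : Fin (m + 1) → Fin (N + 1))) := by
        rw [Fin.range_cons]
        exact (hvI.insert_indep_iff_of_notMem hjv).mpr ⟨hjE, by rw [hvJ]; exact hjT⟩
      exact hdep (by rw [← hr]; exact hind)
    have hne : ∀ J : Set (Fin (N + 1)), J ≠ M.closure (Set.range w) →
        phiW (m + 1) w (ExteriorAlgebra.ι ℤ (eS J) * βc J) = 0 := by
      intro J hJ
      refine main J J w hw ?_
      intro j v hjT hjv hv hvI hvJ hr
      apply hJ
      rw [← hr, Fin.range_cons,
        Matroid.closure_insert_eq_of_mem_closure (by rw [hvJ]; exact hjT), hvJ]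
    have hα0 : phiW (m + 1) w (ExteriorAlgebra.ι ℤ (eS Set.univ) * ∑ᶠ J, βc J) = 0 := by
      have hker : {x : ExteriorAlgebra ℤ (Fin (N + 1) → ℤ) |
          ∃ v : Fin (m + 1) → Fin (N + 1), Function.Injective v ∧
          M.Indep (Set.range v) ∧
          x = ExteriorAlgebra.ιMulti ℤ (m + 1) fun i => fb (v i)} ⊆
          ↑(LinearMap.ker (phiW (m + 1) w)) := by
        rintro x ⟨v, hv, hvI, rfl⟩
        simp only [SetLike.mem_coe, LinearMap.mem_ker]
        exact phiW_eq_zero hw hv fun hr => hdep (by rw [← hr]; exact hvI)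
      exact (Submodule.span_le.mpr hker) hα
    rw [finsum_eq_sum_of_fintype, Finset.mul_sum, map_sum] at hα0
    have hsum : ∀ J : Set (Fin (N + 1)),
        phiW (m + 1) w (ExteriorAlgebra.ι ℤ (eS (Set.univ : Set (Fin (N + 1)))) * βc J) =
        phiW (m + 1) w (ExteriorAlgebra.ι ℤ (eS J) * βc J) +
        phiW (m + 1) w (ExteriorAlgebra.ι ℤ (eS Jᶜ) * βc J) := by
      intro J
      rw [eS_univ_split J, map_add, add_mul, map_add]
    have heq : ∑ J : Set (Fin (N + 1)),
        (phiW (m + 1) w (ExteriorAlgebra.ι ℤ (eS J) * βc J) +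
          phiW (m + 1) w (ExteriorAlgebra.ι ℤ (eS Jᶜ) * βc J)) =
        phiW (m + 1) w (ExteriorAlgebra.ι ℤ (eS (M.closure (Set.range w))) *
          βc (M.closure (Set.range w))) +
        phiW (m + 1) w (ExteriorAlgebra.ι ℤ (eS (M.closure (Set.range w))ᶜ) *
          βc (M.closure (Set.range w))) :=
      Finset.sum_eq_single _ (fun J _ hJ => by rw [hne J hJ, hcompl J, zero_add]) (by simp)
    rw [Finset.sum_congr rfl fun J _ => hsum J, heq, hcompl, add_zero] at hα0
    exact hα0
  intro J₀
  have hmem : ExteriorAlgebra.ι ℤ (eS J₀) * βc J₀ ∈ Submodule.span ℤ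
      {y : ExteriorAlgebra ℤ (Fin (N + 1) → ℤ) | ∃ u : Fin (m + 1) → Fin (N + 1),
        Function.Injective u ∧ y = ExteriorAlgebra.ιMulti ℤ (m + 1) fun i => fb (u i)} := by
    have hsub : {x : ExteriorAlgebra ℤ (Fin (N + 1) → ℤ) | ∃ v : Fin m → Fin (N + 1),
        Function.Injective v ∧ M.Indep (Set.range v) ∧
        M.closure (Set.range v) = J₀ ∧
        x = ExteriorAlgebra.ιMulti ℤ m fun i => fb (v i)} ⊆
        ↑(Submodule.comap (LinearMap.mulLeft ℤ (ExteriorAlgebra.ι ℤ (eS J₀)))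
          (Submodule.span ℤ {y : ExteriorAlgebra ℤ (Fin (N + 1) → ℤ) |
            ∃ u : Fin (m + 1) → Fin (N + 1), Function.Injective u ∧
            y = ExteriorAlgebra.ιMulti ℤ (m + 1) fun i => fb (u i)})) := by
      rintro x ⟨v, hv, -, -, rfl⟩
      simp only [SetLike.mem_coe, Submodule.mem_comap, LinearMap.mulLeft_apply]
      rw [eS_eq_sum J₀, map_sum, Finset.sum_mul]
      refine Submodule.sum_mem _ fun j _ => ?_
      rw [map_smul, smul_mul_assoc, ι_mul_ιMulti]
      refine Submodule.smul_mem _ _ ?_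
      by_cases hjv : j ∈ Set.range v
      · rw [ιMulti_fb_zero (by rw [Fin.cons_injective_iff]; tauto)]
        exact Submodule.zero_mem _
      · exact Submodule.subset_span ⟨Fin.cons j v, Fin.cons_injective_iff.mpr ⟨hjv, hv⟩, rfl⟩
    exact (Submodule.span_le.mpr hsub) (hβ J₀)
  refine extraction _ hmem ?_
  intro w hw
  by_cases hdep : M.Indep (Set.range w)
  · refine main J₀ J₀ w hw ?_
    intro j v hjT hjv hv hvI hvJ hr
    have hnind : ¬ M.Indep (Set.range (Fin.cons j v : Fin (m + 1) → Fin (N + 1))) := by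
      rw [Fin.range_cons, hvI.insert_indep_iff_of_notMem hjv]
      rintro ⟨-, hjc⟩
      exact hjc (by rw [hvJ]; exact hjT)
    exact hnind (by rw [hr]; exact hdep)
  · by_cases hJ : M.closure (Set.range w) = J₀
    · have h := hsplit w hw hdep
      rwa [hJ] at h
    · refine main J₀ J₀ w hw ?_
      intro j v hjT hjv hv hvI hvJ hr
      apply hJ
      rw [← hr, Fin.range_cons,
        Matroid.closure_insert_eq_of_mem_closure (by rw [hvJ]; exact hjT), hvJ]
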